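/- Contiguous WZ relation in b: Let a, b be complex numbers with b ≠ 0, 1 + a − b not a nonpositive integer, and a − b not a nonpositive integer. Define M(a,b,k) = (a)_k (b)_k (−1)^k / ((1+a−b)_k k!) and G'(a,b,k) = M(a,b,k) · (a−b+k)k / b. Then for every nonnegative integer k: (a − 2b) M(a,b,k) + (−2a + 2b) M(a,b+1,k) = G'(a,b,k+1) − G'(a,b,k). -/

import Mathlib

open Complex Finset Filter Topology

/-- The Pochhammer symbol `(x)_k = x (x+1) ⋯ (x+k-1)`. -/
noncomputable def poch (x : ℂ) (k : ℕ) : ℂ := (ascPochhammer ℂ k).eval x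

lemma poch_succ (x : ℂ) (k : ℕ) : poch x (k+1) = poch x k * (x + k) := by
  simp [poch, ascPochhammer_succ_right]

lemma poch_succ_left (x : ℂ) (k : ℕ) : poch x (k+1) = x * poch (x+1) k := by
  simp [poch, ascPochhammer_succ_left, Polynomial.eval_comp]

lemma poch_ne_zero (x : ℂ) (h : ∀ m : ℕ, x ≠ -(m : ℂ)) (k : ℕ) : poch x k ≠ 0 := by
  induction k with
  | zero => simp [poch]
  | succ n ih =>
      rw [poch_succ]
      refine mul_ne_zero ih ?_
      intro h0
      exact h n (by linear_combination h0)

/-- The Kummer summand `M(a,b,k) = (a)_k (b)_k (-1)^k / ((1+a-b)_k k!)`. -/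
noncomputable def kummerM (a b : ℂ) (k : ℕ) : ℂ :=
  poch a k * poch b k * (-1 : ℂ) ^ k / (poch (1 + a - b) k * (Nat.factorial k : ℂ))

/-- The certificate function `G'(a,b,k) = M(a,b,k) (a-b+k) k / b`. -/
noncomputable def kummerG' (a b : ℂ) (k : ℕ) : ℂ :=
  kummerM a b k * ((a - b + k) * k / b)

/-- Contiguous WZ relation in `b`:
`(a-2b) M(a,b,k) + (-2a+2b) M(a,b+1,k) = G'(a,b,k+1) - G'(a,b,k)`. -/
theorem kummer_contiguous_WZ (a b : ℂ) (hb : b ≠ 0)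
    (h1 : ∀ m : ℕ, 1 + a - b ≠ -(m : ℂ))
    (h2 : ∀ m : ℕ, a - b ≠ -(m : ℂ)) :
    ∀ k : ℕ,
      (a - 2 * b) * kummerM a b k + (-2 * a + 2 * b) * kummerM a (b + 1) k
        = kummerG' a b (k + 1) - kummerG' a b k := by
  intro k
  have hR : poch (1 + a - b) k ≠ 0 := poch_ne_zero _ h1 k
  have hS : poch (a - b) k ≠ 0 := poch_ne_zero _ h2 k
  have habk : a - b + (k : ℂ) ≠ 0 := fun h0 => h2 k (by linear_combination h0)
  have hfac : ((Nat.factorial k : ℕ) : ℂ) ≠ 0 := Nat.cast_ne_zero.mpr k.factorial_ne_zero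
  have hb1 : b * poch (b + 1) k = poch b k * (b + k) := by
    rw [← poch_succ_left, poch_succ]
  have habp : poch (a - b) k * (a - b + k) = (a - b) * poch (1 + a - b) k := by
    have h3 : (1 : ℂ) + a - b = (a - b) + 1 := by ring
    rw [h3, ← poch_succ_left, poch_succ]
  have e1 : (1 : ℂ) + a - (b + 1) = a - b := by ring
  have hab0 : a - b ≠ 0 := by simpa using h2 0
  have hk1 : ((k : ℂ) + 1) ≠ 0 := by exact_mod_cast Nat.succ_ne_zero k
  have h1k : (1 : ℂ) + a - b + k ≠ 0 := fun h0 => h1 k (by linear_combination h0)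
  have hb1' : poch (b + 1) k = poch b k * (b + k) / b := by
    field_simp; linear_combination hb1
  have habp' : poch (a - b) k = (a - b) * poch (1 + a - b) k / (a - b + k) := by
    field_simp; linear_combination habp
  set P := poch a k with hPd
  set Q := poch b k with hQd
  set R := poch (1 + a - b) k with hRd
  set F := ((Nat.factorial k : ℕ) : ℂ) with hFd
  set D := b * (a - b) * (a - b + (k : ℂ)) * R * F * ((k : ℂ) + 1) with hDd
  have hD : D ≠ 0 := by
    rw [hDd]
    exact mul_ne_zero (mul_ne_zero (mul_ne_zero (mul_ne_zero (mul_ne_zero hb hab0) habk) hR) hfac) hk1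
  have hM1 : kummerM a b k
      = P * Q * (-1 : ℂ) ^ k * ((a - b) * (a - b + k) * ((k : ℂ) + 1) * b) / D := by
    simp only [kummerM, ← hPd, ← hQd, ← hRd, ← hFd, hDd]
    field_simp
  have hM2 : kummerM a (b + 1) k
      = P * Q * (-1 : ℂ) ^ k * ((b + k) * (a - b + k) ^ 2 * ((k : ℂ) + 1)) / D := by
    simp only [kummerM, e1, hb1', habp', ← hPd, ← hQd, ← hRd, ← hFd, hDd]
    field_simp
  have hG0 : kummerG' a b k
      = P * Q * (-1 : ℂ) ^ k * ((a - b + k) ^ 2 * k * (a - b) * ((k : ℂ) + 1)) / D := by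
    simp only [kummerG', kummerM, ← hPd, ← hQd, ← hRd, ← hFd, hDd]
    field_simp
  have hG1 : kummerG' a b (k + 1)
      = P * Q * (-1 : ℂ) ^ k * (-((a + k) * (b + k) * (a - b) * (a - b + k) * ((k : ℂ) + 1))) / D := by
    simp only [kummerG', kummerM, poch_succ, Nat.factorial_succ, pow_succ, Nat.cast_succ,
      Nat.cast_mul, ← hPd, ← hQd, ← hRd, ← hFd, hDd]
    field_simp
    ring
  rw [hM1, hM2, hG0, hG1, div_sub_div_same, ← mul_div_assoc, ← mul_div_assoc,
    ← add_div, div_eq_div_iff hD hD]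
  ring
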